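/- Let H be an M×N real matrix, y ∈ ℝ^M, γ > 0, S ⊆ ℝ^N, and P : ℝ^N → S a map satisfying the local obtuse-angle condition: for every x ∈ ℝ^N there exists ε > 0 such that ⟨z − P(x), x − P(x)⟩ ≤ 0 for all z ∈ S with ‖z − P(x)‖ ≤ ε. Then every fixed point x* of the map G(x) = P(x − γ Hᵀ H x + γ Hᵀ y) is a local minimizer of ‖H x − y‖² over S, i.e. there exists ε > 0 such that ‖H x* − y‖ ≤ ‖H z − y‖ for all z ∈ S with ‖z − x*‖ ≤ ε. -/

import Mathlib

open Matrix
open scoped RealInnerProductSpace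

/-- Every fixed point of `G x = P (x - γ Hᵀ H x + γ Hᵀ y)`, where `P` satisfies the
local obtuse-angle condition w.r.t. `S`, is a local minimizer of `‖Hx - y‖²` over `S`. -/
theorem fixed_point_is_local_minimizer
    {M N : ℕ} (H : Matrix (Fin M) (Fin N) ℝ) (y : EuclideanSpace ℝ (Fin M))
    (γ : ℝ) (hγ : 0 < γ)
    (S : Set (EuclideanSpace ℝ (Fin N)))
    (P : EuclideanSpace ℝ (Fin N) → EuclideanSpace ℝ (Fin N))
    (hPS : ∀ x, P x ∈ S)
    (hlocal : ∀ x : EuclideanSpace ℝ (Fin N), ∃ ε > 0,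
      ∀ z ∈ S, ‖z - P x‖ ≤ ε → (inner ℝ (z - P x) (x - P x) : ℝ) ≤ 0)
    (xstar : EuclideanSpace ℝ (Fin N))
    (hfix : P (xstar - γ • (Matrix.toEuclideanLin Hᵀ (Matrix.toEuclideanLin H xstar))
        + γ • (Matrix.toEuclideanLin Hᵀ y)) = xstar) :
    ∃ ε > 0, ∀ z ∈ S, ‖z - xstar‖ ≤ ε →
      ‖Matrix.toEuclideanLin H xstar - y‖ ≤ ‖Matrix.toEuclideanLin H z - y‖ := by
  set A := Matrix.toEuclideanLin H with hA
  set u := xstar - γ • (Matrix.toEuclideanLin Hᵀ (A xstar))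
      + γ • (Matrix.toEuclideanLin Hᵀ y) with hu
  obtain ⟨ε, hε, hobt⟩ := hlocal u
  refine ⟨ε, hε, fun z hz hdist => ?_⟩
  have key : (inner ℝ (z - xstar) (u - xstar) : ℝ) ≤ 0 := by
    have := hobt z hz (by rwa [hfix])
    rwa [hfix] at this
  have hT : Matrix.toEuclideanLin Hᵀ = LinearMap.adjoint A := by
    rw [hA, ← Matrix.toEuclideanLin_conjTranspose_eq_adjoint]
    congr 1
  have hux : u - xstar = γ • (LinearMap.adjoint A) (y - A xstar) := by
    rw [hu, hT]
    rw [map_sub]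
    module
  rw [hux] at key
  have key2 : (inner ℝ (A (z - xstar)) (y - A xstar) : ℝ) ≤ 0 := by
    rw [real_inner_smul_right, LinearMap.adjoint_inner_right] at key
    nlinarith
  rw [map_sub] at key2
  have h1 : (0:ℝ) ≤ inner ℝ (A xstar - y) (A z - A xstar) := by
    have h := key2
    rw [show (y - A xstar : EuclideanSpace ℝ (Fin M)) = -(A xstar - y) by abel,
      inner_neg_right, real_inner_comm] at h
    linarith
  have hexp : ‖A z - y‖ ^ 2 = ‖A xstar - y‖ ^ 2
      + 2 * (inner ℝ (A xstar - y) (A z - A xstar) : ℝ) + ‖A z - A xstar‖ ^ 2 := by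
    have : (A z - y : EuclideanSpace ℝ (Fin M)) = (A xstar - y) + (A z - A xstar) := by abel
    rw [this, norm_add_sq_real]
    try ring
  nlinarith [norm_nonneg (A z - y), norm_nonneg (A xstar - y), sq_nonneg ‖A z - A xstar‖]
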